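/- Fix γ > 0 and β ∈ (0,1]. For all ε > 0 and M > 0 there exists c = c(ε, M, β, γ) > 0 with the following property. Let a₁,b₁,a₂,b₂ ≥ 0 and m > 0 define a quartet metric d on {v₁,w₁,v₂,w₂} by d(v₁,w₁)=a₁+b₁, d(v₂,w₂)=a₂+b₂, d(v₁,v₂)=a₁+m+a₂, d(v₁,w₂)=a₁+m+b₂, d(w₁,v₂)=b₁+m+a₂, d(w₁,w₂)=b₁+m+b₂, and suppose d(x,y) < M for all pairs x,y. Let (σ^t)_{t=1}^k be i.i.d. random vectors in {−1,+1}^{\{v₁,w₁,v₂,w₂\}} with E[σ_x^t σ_y^t] = e^{−2 d(x,y)} for all pairs x ≠ y, and let (σ̂^t)_{t=1}^k be {−1,+1}^{\{v₁,w₁,v₂,w₂\}}-valued with the property that, conditionally on (σ^t)_{t=1}^k, the family (σ̂_x^t)_{x,t} is independent with P[σ̂_x^t = σ_x^t | ·] = (1+η_x)/2 for constants η_x ∈ [β,1]. If k ≥ c·log n for an integer n ≥ 2, then with probability at least 1 − n^{−γ}, |Int(σ̂_{v₁}, σ̂_{w₁}, σ̂_{v₂}, σ̂_{w₂}) − m|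 < ε, where Int(·) := (1/2)·( Dist(σ̂_{v₁},σ̂_{v₂}) + Dist(σ̂_{w₁},σ̂_{w₂}) − Dist(σ̂_{v₁},σ̂_{w₁}) − Dist(σ̂_{v₂},σ̂_{w₂}) ). -/

import Mathlib

open scoped Classical

/-- The ±1 spin value of a Boolean state. -/
def pmVal (b : Bool) : ℝ := if b then 1 else -1

/-- Symmetric-channel weight: a ±1 signal is reproduced with probability
`(1+η)/2` and flipped with probability `(1−η)/2`. -/
noncomputable def channel (η : ℝ) (a b : Bool) : ℝ :=
  if b = a then (1 + η) / 2 else (1 - η) / 2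

/-- The quartet tree metric on the four points `v₁ = 0`, `w₁ = 1`, `v₂ = 2`,
`w₂ = 3`, with split `v₁w₁|v₂w₂`, leg lengths `a₁,b₁,a₂,b₂` and internal path
length `m`. -/
def quartetDist (a₁ b₁ a₂ b₂ m : ℝ) : Fin 4 → Fin 4 → ℝ :=
  !![0,      a₁ + b₁,      a₁ + m + a₂, a₁ + m + b₂;
     a₁ + b₁,      0,      b₁ + m + a₂, b₁ + m + b₂;
     a₁ + m + a₂, b₁ + m + a₂,      0,  a₂ + b₂;
     a₁ + m + b₂, b₁ + m + b₂, a₂ + b₂,      0]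

lemma pmVal_abs (b : Bool) : |pmVal b| = 1 := by cases b <;> simp [pmVal]

lemma channel_nonneg {η : ℝ} (h0 : -1 ≤ η) (h1 : η ≤ 1) (a b : Bool) : 0 ≤ channel η a b := by
  unfold channel; split <;> linarith

lemma channel_sum (η : ℝ) (a : Bool) : channel η a true + channel η a false = 1 := by
  cases a <;> simp [channel] <;> ring

lemma channel_sum_pm (η : ℝ) (a : Bool) :
    channel η a true * pmVal true + channel η a false * pmVal false = η * pmVal a := by
  cases a <;> simp [channel, pmVal] <;> ring

lemma sum_fun_prod {ι E : Type*} [Fintype ι] [DecidableEq ι] [Fintype E] [DecidableEq E]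
    (F : ι → E → ℝ) : ∑ g : ι → E, ∏ i, F i (g i) = ∏ i, ∑ e, F i e :=
  (Fintype.prod_sum F).symm

lemma corr_step (η : Fin 4 → ℝ) (x y : Fin 4) (hxy : x ≠ y) (s : Fin 4 → Bool) :
    ∑ sh : Fin 4 → Bool, (∏ z, channel (η z) (s z) (sh z)) * (pmVal (sh x) * pmVal (sh y))
      = η x * η y * (pmVal (s x) * pmVal (s y)) := by
  have key : ∀ sh : Fin 4 → Bool,
      (∏ z, channel (η z) (s z) (sh z)) * (pmVal (sh x) * pmVal (sh y))
        = ∏ z, (channel (η z) (s z) (sh z) *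
            ((if z = x then pmVal (sh z) else 1) * (if z = y then pmVal (sh z) else 1))) := by
    intro sh
    rw [Finset.prod_mul_distrib, Finset.prod_mul_distrib, Finset.prod_ite_eq',
      Finset.prod_ite_eq']
    simp [mul_assoc]
  simp only [key]
  rw [← Fintype.prod_sum fun z b => channel (η z) (s z) b *
      ((if z = x then pmVal b else 1) * (if z = y then pmVal b else 1))]
  have percoord : ∀ z, (∑ b : Bool, channel (η z) (s z) b *
      ((if z = x then pmVal b else 1) * (if z = y then pmVal b else 1)))
      = (if z = x then η z * pmVal (s z) else 1) * (if z = y then η z * pmVal (s z) else 1) := by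
    intro z
    by_cases hx : z = x
    · subst hx
      rw [Fintype.sum_bool]
      simpa [hxy] using channel_sum_pm (η z) (s z)
    · by_cases hy : z = y
      · subst hy
        rw [Fintype.sum_bool]
        simpa [hx] using channel_sum_pm (η z) (s z)
      · rw [Fintype.sum_bool]
        simpa [hx, hy] using channel_sum (η z) (s z)
  simp only [percoord]
  rw [Finset.prod_mul_distrib, Finset.prod_ite_eq', Finset.prod_ite_eq']
  simp
  ring

lemma exp_quad_bound {y : ℝ} (hy : |y| ≤ 1) : Real.exp y ≤ 1 + y + y ^ 2 := by
  have h := Real.exp_bound hy (n := 2) two_pos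
  have hs : ∑ m ∈ Finset.range 2, y ^ m / m.factorial = 1 + y := by
    simp [Finset.sum_range_succ]
  rw [hs] at h
  norm_num [Nat.factorial] at h
  have := (abs_sub_le_iff.1 h).1
  nlinarith [sq_nonneg y]

lemma chernoff {E : Type*} [Fintype E] (p : E → ℝ) (hp : ∀ e, 0 ≤ p e)
    (hp1 : ∑ e, p e = 1) (f : E → ℝ) (hf : ∀ e, |f e| ≤ 1)
    (δ : ℝ) (hδ0 : 0 < δ) (hδ1 : δ ≤ 1) (k : ℕ) :
    ∑ ω : Fin k → E, (∏ t, p (ω t)) *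
        (if (∑ e, p e * f e) + δ ≤ (1/(k:ℝ)) * ∑ t, f (ω t) then (1:ℝ) else 0)
      ≤ Real.exp (-(k * δ ^ 2 / 16)) := by
  set μ := ∑ e, p e * f e with hμdef
  set lam := δ / 8 with hlam
  have hlam0 : 0 < lam := by positivity
  have hμ1 : |μ| ≤ 1 := by
    calc |μ| ≤ ∑ e, |p e * f e| := Finset.abs_sum_le_sum_abs _ _
    _ ≤ ∑ e, p e := by
        apply Finset.sum_le_sum
        intro e _
        rw [abs_mul, abs_of_nonneg (hp e)]
        calc p e * |f e| ≤ p e * 1 := by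
              exact mul_le_mul_of_nonneg_left (hf e) (hp e)
        _ = p e := mul_one _
    _ = 1 := hp1
  -- pointwise bound
  have point : ∀ ω : Fin k → E, (∏ t, p (ω t)) *
      (if μ + δ ≤ (1/(k:ℝ)) * ∑ t, f (ω t) then (1:ℝ) else 0)
      ≤ (∏ t, p (ω t) * Real.exp (lam * (f (ω t) - μ))) * Real.exp (-(lam * k * δ)) := by
    intro ω
    have hprod : (∏ t, p (ω t) * Real.exp (lam * (f (ω t) - μ)))
        = (∏ t, p (ω t)) * Real.exp (lam * ∑ t, (f (ω t) - μ)) := by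
      rw [Finset.prod_mul_distrib, Finset.mul_sum, Real.exp_sum]
    rw [hprod]
    by_cases hcond : μ + δ ≤ (1/(k:ℝ)) * ∑ t, f (ω t)
    · rw [if_pos hcond, mul_one, mul_assoc, ← Real.exp_add]
      have hsum : (k : ℝ) * (μ + δ) ≤ ∑ t, f (ω t) := by
        rcases Nat.eq_zero_or_pos k with hk | hk
        · subst hk; simp
        · have hkpos : (0:ℝ) < k := by exact_mod_cast hk
          rw [← le_div_iff₀' hkpos]
          calc μ + δ ≤ (1/(k:ℝ)) * ∑ t, f (ω t) := hcond
          _ = (∑ t, f (ω t)) / k := by ring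
      have hexp : (0:ℝ) ≤ lam * ∑ t, (f (ω t) - μ) + -(lam * k * δ) := by
        rw [Finset.sum_sub_distrib, Finset.sum_const, Finset.card_univ, Fintype.card_fin,
          nsmul_eq_mul]
        have : (k:ℝ) * μ + k * δ ≤ ∑ t, f (ω t) := by linarith [hsum]
        nlinarith [hlam0.le, this]
      have h1 : (1:ℝ) ≤ Real.exp (lam * ∑ t, (f (ω t) - μ) + -(lam * k * δ)) := by
        rw [← Real.exp_zero]
        exact Real.exp_le_exp.2 hexp
      have hp0 : 0 ≤ ∏ t, p (ω t) := Finset.prod_nonneg fun t _ => hp (ω t)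
      nlinarith [h1, hp0]
    · rw [if_neg hcond, mul_zero]
      exact mul_nonneg (mul_nonneg (Finset.prod_nonneg fun t _ => hp _)
        (Real.exp_pos _).le) (Real.exp_pos _).le
  calc ∑ ω : Fin k → E, (∏ t, p (ω t)) *
        (if μ + δ ≤ (1/(k:ℝ)) * ∑ t, f (ω t) then (1:ℝ) else 0)
      ≤ ∑ ω : Fin k → E, (∏ t, p (ω t) * Real.exp (lam * (f (ω t) - μ)))
          * Real.exp (-(lam * k * δ)) := Finset.sum_le_sum fun ω _ => point ω
    _ = (∑ e, p e * Real.exp (lam * (f e - μ))) ^ k * Real.exp (-(lam * k * δ)) := by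
        rw [← Finset.sum_mul, Fintype.sum_pow]
    _ ≤ Real.exp (4 * lam ^ 2) ^ k * Real.exp (-(lam * k * δ)) := by
        apply mul_le_mul_of_nonneg_right _ (Real.exp_pos _).le
        apply pow_le_pow_left₀ (Finset.sum_nonneg fun e _ =>
          mul_nonneg (hp e) (Real.exp_pos _).le)
        calc ∑ e, p e * Real.exp (lam * (f e - μ))
            ≤ ∑ e, p e * (1 + lam * (f e - μ) + (lam * (f e - μ)) ^ 2) := by
              apply Finset.sum_le_sum
              intro e _
              apply mul_le_mul_of_nonneg_left _ (hp e)
              apply exp_quad_bound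
              rw [abs_mul, abs_of_pos hlam0]
              calc lam * |f e - μ| ≤ lam * 2 := by
                    apply mul_le_mul_of_nonneg_left _ hlam0.le
                    calc |f e - μ| ≤ |f e| + |μ| := abs_sub _ _
                    _ ≤ 1 + 1 := add_le_add (hf e) hμ1
                    _ = 2 := by norm_num
              _ ≤ 1 := by rw [hlam]; linarith
          _ ≤ 1 + 4 * lam ^ 2 := by
              have h0 : ∑ e, p e * (f e - μ) = 0 := by
                have he : ∑ e, p e * (f e - μ) = (∑ e, p e * f e) - μ * ∑ e, p e := by
                  rw [Finset.mul_sum, ← Finset.sum_sub_distrib]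
                  exact Finset.sum_congr rfl fun e _ => by ring
                rw [he, hp1, ← hμdef]; ring
              have h2 : ∑ e, p e * (f e - μ) ^ 2 ≤ 4 := by
                calc ∑ e, p e * (f e - μ) ^ 2 ≤ ∑ e, p e * 4 := by
                      apply Finset.sum_le_sum
                      intro e _
                      apply mul_le_mul_of_nonneg_left _ (hp e)
                      have hb : |f e - μ| ≤ 2 := by
                        calc |f e - μ| ≤ |f e| + |μ| := abs_sub _ _
                        _ ≤ 1 + 1 := add_le_add (hf e) hμ1
                        _ = 2 := by norm_num
                      have := abs_le.1 hb
                      nlinarith [this.1, this.2]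
                _ = 4 := by rw [← Finset.sum_mul, hp1, one_mul]
              have hexpand : ∑ e, p e * (1 + lam * (f e - μ) + (lam * (f e - μ)) ^ 2)
                  = (∑ e, p e) + lam * (∑ e, p e * (f e - μ))
                    + lam ^ 2 * (∑ e, p e * (f e - μ) ^ 2) := by
                rw [Finset.mul_sum, Finset.mul_sum, ← Finset.sum_add_distrib,
                  ← Finset.sum_add_distrib]
                exact Finset.sum_congr rfl fun e _ => by ring
              rw [hexpand, hp1, h0]
              nlinarith [sq_nonneg lam, h2]
          _ ≤ Real.exp (4 * lam ^ 2) := by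
              have := Real.add_one_le_exp (4 * lam ^ 2)
              linarith
    _ = Real.exp (-(k * δ ^ 2 / 16)) := by
        rw [← Real.exp_nat_mul, ← Real.exp_add]
        congr 1
        rw [hlam]; ring

lemma log_close {r μ μ₀ δ : ℝ} (hμ₀ : 0 < μ₀) (hμ : μ₀ ≤ μ) (hδ : δ ≤ μ₀ / 2)
    (h : |r - μ| < δ) : 0 < r ∧ |Real.log r - Real.log μ| ≤ 2 * δ / μ₀ := by
  have hδ0 : 0 < δ := lt_of_le_of_lt (abs_nonneg _) h
  have habs := abs_lt.1 h
  have hr : μ₀ / 2 < r := by linarith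
  have hr0 : 0 < r := by linarith
  have hμ0 : 0 < μ := by linarith
  constructor
  · exact hr0
  · have h1 : Real.log r - Real.log μ ≤ 2 * δ / μ₀ := by
      have := Real.log_le_sub_one_of_pos (show 0 < r / μ by positivity)
      rw [Real.log_div hr0.ne' hμ0.ne'] at this
      have h2 : r / μ - 1 = (r - μ) / μ := by field_simp
      rw [h2] at this
      have h3 : (r - μ) / μ ≤ δ / μ₀ := by
        apply div_le_div₀ (le_of_lt hδ0) (le_of_lt habs.2) hμ₀ hμ
      have h4 : δ / μ₀ ≤ 2 * δ / μ₀ := by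
        gcongr
        linarith
      linarith
    have h2 : Real.log μ - Real.log r ≤ 2 * δ / μ₀ := by
      have := Real.log_le_sub_one_of_pos (show 0 < μ / r by positivity)
      rw [Real.log_div hμ0.ne' hr0.ne'] at this
      have h2 : μ / r - 1 = (μ - r) / r := by field_simp
      rw [h2] at this
      have h3 : (μ - r) / r ≤ δ / (μ₀ / 2) := by
        apply div_le_div₀ (le_of_lt hδ0) (by linarith) (by linarith) (le_of_lt hr)
      have h4 : δ / (μ₀ / 2) = 2 * δ / μ₀ := by field_simp
      linarith
    rw [abs_le]
    exact ⟨by linarith, h1⟩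

lemma det_good (ε μ₀ δ : ℝ) (hμ₀ : 0 < μ₀) (hε : 0 < ε)
    (hδ2 : δ ≤ μ₀ / 2) (hδe : δ ≤ ε * μ₀ / 8)
    (r02 r13 r01 r23 μ02 μ13 μ01 μ23 m : ℝ)
    (h02 : μ₀ ≤ μ02) (h13 : μ₀ ≤ μ13) (h01 : μ₀ ≤ μ01) (h23 : μ₀ ≤ μ23)
    (hm : (1/2 : ℝ) * ((-((1/2) * Real.log μ02)) + (-((1/2) * Real.log μ13))
        - (-((1/2) * Real.log μ01)) - (-((1/2) * Real.log μ23))) = m)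
    (d02 : |r02 - μ02| < δ) (d13 : |r13 - μ13| < δ)
    (d01 : |r01 - μ01| < δ) (d23 : |r23 - μ23| < δ) :
    0 < r02 ∧ 0 < r13 ∧ 0 < r01 ∧ 0 < r23 ∧
      |(1/2 : ℝ) * ((-((1/2) * Real.log r02)) + (-((1/2) * Real.log r13))
        - (-((1/2) * Real.log r01)) - (-((1/2) * Real.log r23))) - m| < ε := by
  obtain ⟨p02, l02⟩ := log_close hμ₀ h02 hδ2 d02
  obtain ⟨p13, l13⟩ := log_close hμ₀ h13 hδ2 d13
  obtain ⟨p01, l01⟩ := log_close hμ₀ h01 hδ2 d01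
  obtain ⟨p23, l23⟩ := log_close hμ₀ h23 hδ2 d23
  refine ⟨p02, p13, p01, p23, ?_⟩
  have hB : 2 * δ / μ₀ ≤ ε / 4 := by
    rw [div_le_iff₀ hμ₀]
    nlinarith
  have key : (1/2 : ℝ) * ((-((1/2) * Real.log r02)) + (-((1/2) * Real.log r13))
        - (-((1/2) * Real.log r01)) - (-((1/2) * Real.log r23))) - m
      = -(1/4) * ((Real.log r02 - Real.log μ02) + (Real.log r13 - Real.log μ13)
          - (Real.log r01 - Real.log μ01) - (Real.log r23 - Real.log μ23)) := by
    rw [← hm]; ring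
  rw [key]
  have a02 := abs_le.1 l02
  have a13 := abs_le.1 l13
  have a01 := abs_le.1 l01
  have a23 := abs_le.1 l23
  rw [abs_lt]
  constructor <;> linarith [a02.1, a02.2, a13.1, a13.2, a01.1, a01.2, a23.1, a23.2]

lemma chernoff_abs {E : Type*} [Fintype E] (p : E → ℝ) (hp : ∀ e, 0 ≤ p e)
    (hp1 : ∑ e, p e = 1) (f : E → ℝ) (hf : ∀ e, |f e| ≤ 1)
    (δ : ℝ) (hδ0 : 0 < δ) (hδ1 : δ ≤ 1) (k : ℕ) :
    ∑ ω : Fin k → E, (∏ t, p (ω t)) *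
        (if δ ≤ |(1/(k:ℝ)) * (∑ t, f (ω t)) - ∑ e, p e * f e| then (1:ℝ) else 0)
      ≤ 2 * Real.exp (-(k * δ ^ 2 / 16)) := by
  have hWnn : ∀ ω : Fin k → E, 0 ≤ ∏ t, p (ω t) :=
    fun ω => Finset.prod_nonneg fun t _ => hp (ω t)
  have hup := chernoff p hp hp1 f hf δ hδ0 hδ1 k
  have hlo := chernoff p hp hp1 (fun e => -f e) (fun e => by simpa using hf e) δ hδ0 hδ1 k
  simp only [mul_neg, Finset.sum_neg_distrib] at hlo
  have key : ∀ ω : Fin k → E,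
      (if δ ≤ |(1/(k:ℝ)) * (∑ t, f (ω t)) - ∑ e, p e * f e| then (1:ℝ) else 0)
      ≤ (if (∑ e, p e * f e) + δ ≤ (1/(k:ℝ)) * ∑ t, f (ω t) then (1:ℝ) else 0)
        + (if (-∑ e, p e * f e) + δ ≤ -((1/(k:ℝ)) * ∑ t, f (ω t)) then (1:ℝ) else 0) := by
    intro ω
    by_cases h : δ ≤ |(1/(k:ℝ)) * (∑ t, f (ω t)) - ∑ e, p e * f e|
    · rw [if_pos h]
      rcases le_abs.1 h with h1 | h1
      · rw [if_pos (by linarith)]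
        have : (0:ℝ) ≤ if (-∑ e, p e * f e) + δ ≤ -((1/(k:ℝ)) * ∑ t, f (ω t))
            then (1:ℝ) else 0 := by positivity
        linarith
      · rw [abs_sub_comm] at h
        have h2 : (-∑ e, p e * f e) + δ ≤ -((1/(k:ℝ)) * ∑ t, f (ω t)) := by
          linarith
        rw [if_pos h2]
        have : (0:ℝ) ≤ if (∑ e, p e * f e) + δ ≤ (1/(k:ℝ)) * ∑ t, f (ω t)
            then (1:ℝ) else 0 := by positivity
        linarith
    · rw [if_neg h]
      positivity
  calc ∑ ω : Fin k → E, (∏ t, p (ω t)) *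
        (if δ ≤ |(1/(k:ℝ)) * (∑ t, f (ω t)) - ∑ e, p e * f e| then (1:ℝ) else 0)
      ≤ ∑ ω : Fin k → E, ((∏ t, p (ω t)) *
          (if (∑ e, p e * f e) + δ ≤ (1/(k:ℝ)) * ∑ t, f (ω t) then (1:ℝ) else 0)
        + (∏ t, p (ω t)) *
          (if (-∑ e, p e * f e) + δ ≤ -((1/(k:ℝ)) * ∑ t, f (ω t)) then (1:ℝ) else 0)) := by
        apply Finset.sum_le_sum
        intro ω _
        rw [← mul_add]
        exact mul_le_mul_of_nonneg_left (key ω) (hWnn ω)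
    _ ≤ Real.exp (-(k * δ ^ 2 / 16)) + Real.exp (-(k * δ ^ 2 / 16)) := by
        rw [Finset.sum_add_distrib]
        exact add_le_add hup hlo
    _ = 2 * Real.exp (-(k * δ ^ 2 / 16)) := by ring

lemma channel_total (η : Fin 4 → ℝ) (s : Fin 4 → Bool) :
    ∑ sh : Fin 4 → Bool, ∏ z, channel (η z) (s z) (sh z) = 1 := by
  rw [← Fintype.prod_sum fun z b => channel (η z) (s z) b]
  simp [Fintype.sum_bool, channel_sum]

noncomputable def jointP (q : (Fin 4 → Bool) → ℝ) (η : Fin 4 → ℝ)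
    (e : (Fin 4 → Bool) × (Fin 4 → Bool)) : ℝ :=
  q e.1 * ∏ z, channel (η z) (e.1 z) (e.2 z)

lemma sum_pair_eq {A B : Type*} [Fintype A] [Fintype B] [DecidableEq A] [DecidableEq B]
    (k : ℕ) (Q : A → ℝ) (Ch : A → B → ℝ) (G : (Fin k → B) → ℝ) :
    ∑ s : Fin k → A, ∑ sh : Fin k → B,
        (∏ t, Q (s t)) * (∏ t, Ch (s t) (sh t)) * G sh
      = ∑ ω : Fin k → A × B,
          (∏ t, Q (ω t).1 * Ch (ω t).1 (ω t).2) * G (fun t => (ω t).2) := by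
  rw [← Equiv.sum_comp (Equiv.arrowProdEquivProdArrow (Fin k) (fun _ => A) (fun _ => B)).symm
    (fun ω : Fin k → A × B => (∏ t, Q (ω t).1 * Ch (ω t).1 (ω t).2) * G (fun t => (ω t).2)),
    Fintype.sum_prod_type]
  refine Finset.sum_congr rfl fun s _ => Finset.sum_congr rfl fun sh _ => ?_
  show (∏ t, Q (s t)) * (∏ t, Ch (s t) (sh t)) * G sh
    = (∏ t, Q (s t) * Ch (s t) (sh t)) * G sh
  rw [Finset.prod_mul_distrib]

lemma ind_union {P A B C D : Prop} [Decidable P] [Decidable A] [Decidable B]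
    [Decidable C] [Decidable D] (h : ¬A → ¬B → ¬C → ¬D → P) :
    (1:ℝ) - ((if A then (1:ℝ) else 0) + (if B then (1:ℝ) else 0)
      + (if C then (1:ℝ) else 0) + (if D then (1:ℝ) else 0))
      ≤ (if P then (1:ℝ) else 0) := by
  by_cases hA : A <;> by_cases hB : B <;> by_cases hC : C <;> by_cases hD : D <;>
    simp only [hA, hB, hC, hD, if_true, if_false] <;>
    first
      | (rw [if_pos (h hA hB hC hD)]; norm_num)
      | (split <;> norm_num)

set_option maxHeartbeats 12000000 in
/-- **Accuracy of the four-point internal-length estimator on reconstructed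
(biased) sequences.** Fix `γ > 0` and `β ∈ (0,1]`. For all `ε, M > 0` there is
`c = c(ε,M,β,γ) > 0` with the following property. Let `d = quartetDist` be a
quartet metric with split `v₁w₁|v₂w₂` and internal path length `m > 0`, all of
whose pairwise distances are `< M`. Let `(σ^t)_{t<k}` be i.i.d. `{±1}`-vectors
on the four points with one-sample law `q` whose pairwise correlations are
`E[σ_x σ_y] = e^{−2 d(x,y)}`, and let `(σ̂^t)` be obtained from `(σ^t)` by
passing each coordinate independently through a symmetric channel with
correlation `η_x ∈ [β,1]` (the displayed probability is the resulting joint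
law). If `k ≥ c·log n` (`n ≥ 2`), then with probability at least `1 − n^{−γ}`
all four distance estimates `Dist` entering the four-point combination `Int`
are finite (positive empirical correlations) and `|Int − m| < ε`. -/
theorem quartet_internal_length_estimator_accuracy
    (γ β : ℝ) (hγ : 0 < γ) (hβ0 : 0 < β) (hβ1 : β ≤ 1) :
    ∀ ε > (0 : ℝ), ∀ M > (0 : ℝ), ∃ c > (0 : ℝ),
      ∀ a₁ b₁ a₂ b₂ m : ℝ,
        0 ≤ a₁ → 0 ≤ b₁ → 0 ≤ a₂ → 0 ≤ b₂ → 0 < m →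
        (∀ x y : Fin 4, quartetDist a₁ b₁ a₂ b₂ m x y < M) →
        ∀ (n k : ℕ), 2 ≤ n → c * Real.log n ≤ k →
        ∀ (q : (Fin 4 → Bool) → ℝ) (η : Fin 4 → ℝ),
          (∀ a, 0 ≤ q a) → (∑ a : Fin 4 → Bool, q a) = 1 →
          (∀ x y : Fin 4, x ≠ y →
            (∑ a : Fin 4 → Bool, q a * (pmVal (a x) * pmVal (a y)))
              = Real.exp (-2 * quartetDist a₁ b₁ a₂ b₂ m x y)) →
          (∀ x, β ≤ η x ∧ η x ≤ 1) →
          (1 : ℝ) - (n : ℝ) ^ (-γ) ≤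
            ∑ s : Fin k → (Fin 4 → Bool), ∑ sh : Fin k → (Fin 4 → Bool),
              (∏ t, q (s t)) * (∏ t, ∏ x : Fin 4, channel (η x) (s t x) (sh t x)) *
                (if (0 < (1 / (k : ℝ)) * ∑ t, pmVal (sh t 0) * pmVal (sh t 2) ∧
                     0 < (1 / (k : ℝ)) * ∑ t, pmVal (sh t 1) * pmVal (sh t 3) ∧
                     0 < (1 / (k : ℝ)) * ∑ t, pmVal (sh t 0) * pmVal (sh t 1) ∧
                     0 < (1 / (k : ℝ)) * ∑ t, pmVal (sh t 2) * pmVal (sh t 3) ∧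
                     |(1 / 2) *
                        ((-((1 / 2) * Real.log ((1 / (k : ℝ)) * ∑ t, pmVal (sh t 0) * pmVal (sh t 2))))
                          + (-((1 / 2) * Real.log ((1 / (k : ℝ)) * ∑ t, pmVal (sh t 1) * pmVal (sh t 3))))
                          - (-((1 / 2) * Real.log ((1 / (k : ℝ)) * ∑ t, pmVal (sh t 0) * pmVal (sh t 1))))
                          - (-((1 / 2) * Real.log ((1 / (k : ℝ)) * ∑ t, pmVal (sh t 2) * pmVal (sh t 3)))))
                        - m| < ε)
                 then 1 else 0) := by
  intro ε hε M hM
  set μ₀ : ℝ := β ^ 2 * Real.exp (-(2 * M)) with hμ₀def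
  have hμ₀ : 0 < μ₀ := by positivity
  have hexpM : Real.exp (-(2 * M)) ≤ 1 := Real.exp_le_one_iff.2 (by linarith)
  have hμ₀1 : μ₀ ≤ 1 := by nlinarith [hβ0, hβ1]
  set δ : ℝ := min (μ₀ / 2) (ε * μ₀ / 8) with hδdef
  have hδ0 : 0 < δ := lt_min (by positivity) (by positivity)
  have hδ2 : δ ≤ μ₀ / 2 := min_le_left _ _
  have hδe : δ ≤ ε * μ₀ / 8 := min_le_right _ _
  have hδ1 : δ ≤ 1 := le_trans hδ2 (by linarith)
  refine ⟨16 * (γ + 3) / δ ^ 2, by positivity, ?_⟩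
  intro a₁ b₁ a₂ b₂ m ha₁ hb₁ ha₂ hb₂ hm hdM n k hn hk q η hq hq1 hcorr hη
  have hn1 : (1:ℝ) < (n:ℝ) := by
    have : (2:ℝ) ≤ (n:ℝ) := by exact_mod_cast hn
    linarith
  have hlogn : 0 < Real.log n := Real.log_pos hn1
  have hkpos : 0 < (k:ℝ) := lt_of_lt_of_le (by positivity) hk
  have hηpos : ∀ x, 0 < η x := fun x => lt_of_lt_of_le hβ0 (hη x).1
  have hηle : ∀ x, η x ≤ 1 := fun x => (hη x).2
  have hηm1 : ∀ x, -1 ≤ η x := fun x => le_trans (by linarith) (hη x).1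
  -- one-sample law facts
  have hp : ∀ e, 0 ≤ jointP q η e := fun e =>
    mul_nonneg (hq _) (Finset.prod_nonneg fun z _ => channel_nonneg (hηm1 z) (hηle z) _ _)
  have hp1 : ∑ e : (Fin 4 → Bool) × (Fin 4 → Bool), jointP q η e = 1 := by
    simp only [jointP]
    simp only [Fintype.sum_prod_type]
    have h1 : ∀ a : Fin 4 → Bool,
        (∑ b : Fin 4 → Bool, q a * ∏ z, channel (η z) (a z) (b z)) = q a := by
      intro a
      rw [← Finset.mul_sum, channel_total, mul_one]
    rw [Finset.sum_congr rfl fun a _ => h1 a]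
    exact hq1
  have hcore : ∀ x y : Fin 4, x ≠ y →
      (∑ e : (Fin 4 → Bool) × (Fin 4 → Bool),
          jointP q η e * (pmVal (e.2 x) * pmVal (e.2 y)))
        = η x * η y * Real.exp (-2 * quartetDist a₁ b₁ a₂ b₂ m x y) := by
    intro x y hxy
    simp only [jointP]
    simp only [Fintype.sum_prod_type]
    have h1 : ∀ a : Fin 4 → Bool,
        (∑ b : Fin 4 → Bool, (q a * ∏ z, channel (η z) (a z) (b z)) * (pmVal (b x) * pmVal (b y)))
          = η x * η y * (q a * (pmVal (a x) * pmVal (a y))) := by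
      intro a
      simp only [mul_assoc]
      rw [← Finset.mul_sum, corr_step η x y hxy a]
      ring
    rw [Finset.sum_congr rfl fun a _ => h1 a, ← Finset.mul_sum, hcorr x y hxy]
  -- lower bound on the correlations
  have hbnd : ∀ x y : Fin 4,
      μ₀ ≤ η x * η y * Real.exp (-2 * quartetDist a₁ b₁ a₂ b₂ m x y) := by
    intro x y
    have h1 : β ^ 2 ≤ η x * η y := by nlinarith [(hη x).1, (hη y).1]
    have h2 : Real.exp (-(2 * M)) ≤ Real.exp (-2 * quartetDist a₁ b₁ a₂ b₂ m x y) :=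
      Real.exp_le_exp.2 (by have := hdM x y; linarith)
    nlinarith [Real.exp_pos (-(2 * M)), Real.exp_pos (-2 * quartetDist a₁ b₁ a₂ b₂ m x y),
      sq_nonneg β]
  -- the exact value of the four-point combination at the true correlations
  have hmval : (1/2 : ℝ) *
      ((-((1/2) * Real.log (η 0 * η 2 * Real.exp (-2 * quartetDist a₁ b₁ a₂ b₂ m 0 2))))
        + (-((1/2) * Real.log (η 1 * η 3 * Real.exp (-2 * quartetDist a₁ b₁ a₂ b₂ m 1 3))))
        - (-((1/2) * Real.log (η 0 * η 1 * Real.exp (-2 * quartetDist a₁ b₁ a₂ b₂ m 0 1))))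
        - (-((1/2) * Real.log (η 2 * η 3 * Real.exp (-2 * quartetDist a₁ b₁ a₂ b₂ m 2 3)))))
      = m := by
    have lmul : ∀ u v w : ℝ, 0 < u → 0 < v →
        Real.log (u * v * Real.exp w) = Real.log u + Real.log v + w := by
      intro u v w hu hv
      rw [Real.log_mul (by positivity) (Real.exp_ne_zero _), Real.log_mul hu.ne' hv.ne',
        Real.log_exp]
    have e02 : quartetDist a₁ b₁ a₂ b₂ m 0 2 = a₁ + m + a₂ := by simp [quartetDist]
    have e13 : quartetDist a₁ b₁ a₂ b₂ m 1 3 = b₁ + m + b₂ := by simp [quartetDist]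
    have e01 : quartetDist a₁ b₁ a₂ b₂ m 0 1 = a₁ + b₁ := by simp [quartetDist]
    have e23 : quartetDist a₁ b₁ a₂ b₂ m 2 3 = a₂ + b₂ := by simp [quartetDist]
    rw [lmul _ _ _ (hηpos 0) (hηpos 2), lmul _ _ _ (hηpos 1) (hηpos 3),
      lmul _ _ _ (hηpos 0) (hηpos 1), lmul _ _ _ (hηpos 2) (hηpos 3),
      e02, e13, e01, e23]
    ring
  -- Chernoff bounds for the four empirical correlations
  have ch02 := chernoff_abs (jointP q η) hp hp1 (fun e => pmVal (e.2 0) * pmVal (e.2 2))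
    (fun e => by rw [abs_mul, pmVal_abs, pmVal_abs]; norm_num) δ hδ0 hδ1 k
  beta_reduce at ch02
  have ch13 := chernoff_abs (jointP q η) hp hp1 (fun e => pmVal (e.2 1) * pmVal (e.2 3))
    (fun e => by rw [abs_mul, pmVal_abs, pmVal_abs]; norm_num) δ hδ0 hδ1 k
  beta_reduce at ch13
  have ch01 := chernoff_abs (jointP q η) hp hp1 (fun e => pmVal (e.2 0) * pmVal (e.2 1))
    (fun e => by rw [abs_mul, pmVal_abs, pmVal_abs]; norm_num) δ hδ0 hδ1 k
  beta_reduce at ch01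
  have ch23 := chernoff_abs (jointP q η) hp hp1 (fun e => pmVal (e.2 2) * pmVal (e.2 3))
    (fun e => by rw [abs_mul, pmVal_abs, pmVal_abs]; norm_num) δ hδ0 hδ1 k
  beta_reduce at ch23
  have hW1 : (∑ ω : Fin k → ((Fin 4 → Bool) × (Fin 4 → Bool)), ∏ t, jointP q η (ω t)) = 1 := by
    rw [← Fintype.sum_pow (jointP q η) k, hp1, one_pow]
  have hWnn : ∀ ω : Fin k → ((Fin 4 → Bool) × (Fin 4 → Bool)), 0 ≤ ∏ t, jointP q η (ω t) :=
    fun ω => Finset.prod_nonneg fun t _ => hp (ω t)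
  have hnum : 8 * Real.exp (-((k:ℝ) * δ ^ 2 / 16)) ≤ (n:ℝ) ^ (-γ) := by
    rw [Real.rpow_def_of_pos (by linarith : (0:ℝ) < (n:ℝ))]
    have h8 : (8:ℝ) = Real.exp (Real.log 8) := (Real.exp_log (by norm_num)).symm
    rw [h8, ← Real.exp_add]
    apply Real.exp_le_exp.2
    have hlog8 : Real.log 8 ≤ 3 * Real.log n := by
      have h2 : (8:ℝ) = 2 ^ (3:ℕ) := by norm_num
      rw [h2, Real.log_pow]
      have := Real.log_le_log (by norm_num : (0:ℝ) < 2) (by exact_mod_cast hn : (2:ℝ) ≤ (n:ℝ))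
      push_cast
      linarith
    have hkd : (γ + 3) * Real.log n ≤ (k:ℝ) * δ ^ 2 / 16 := by
      have h1 : 16 * (γ + 3) / δ ^ 2 * Real.log n ≤ (k:ℝ) := hk
      have h2 : 0 < δ ^ 2 := by positivity
      calc (γ + 3) * Real.log n = (16 * (γ + 3) / δ ^ 2 * Real.log n) * δ ^ 2 / 16 := by
            field_simp
      _ ≤ (k:ℝ) * δ ^ 2 / 16 := by gcongr
    linarith [hlog8, hkd]
  calc (1:ℝ) - (n:ℝ) ^ (-γ)
      ≤ 1 - 8 * Real.exp (-((k:ℝ) * δ ^ 2 / 16)) := by linarith [hnum]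
    _ ≤ (∑ ω : Fin k → ((Fin 4 → Bool) × (Fin 4 → Bool)), ∏ t, jointP q η (ω t))
        - ((∑ ω : Fin k → ((Fin 4 → Bool) × (Fin 4 → Bool)), (∏ t, jointP q η (ω t)) * (if δ ≤ |1 / (k : ℝ) * ∑ t, pmVal ((ω t).2 0) * pmVal ((ω t).2 2) - (∑ e : (Fin 4 → Bool) × (Fin 4 → Bool), jointP q η e * (pmVal (e.2 0) * pmVal (e.2 2)))| then (1:ℝ) else 0)) + (∑ ω : Fin k → ((Fin 4 → Bool) × (Fin 4 → Bool)), (∏ t, jointP q η (ω t)) * (if δ ≤ |1 / (k : ℝ) * ∑ t, pmVal ((ω t).2 1) * pmVal ((ω t).2 3) - (∑ e : (Fin 4 → Bool) × (Fin 4 → Bool), jointP q η e * (pmVal (e.2 1) * pmVal (e.2 3)))| then (1:ℝ) else 0)) + (∑ ω : Fin k → ((Fin 4 → Bool) × (Fin 4 → Bool)), (∏ t, jointP q η (ω t)) * (if δ ≤ |1 / (k : ℝ) * ∑ t, pmVal ((ω t).2 0) * pmVal ((ω t).2 1) - (∑ e : (Fin 4 → Bool) × (Fin 4 → Bool), jointP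 q η e * (pmVal (e.2 0) * pmVal (e.2 1)))| then (1:ℝ) else 0)) + (∑ ω : Fin k → ((Fin 4 → Bool) × (Fin 4 → Bool)), (∏ t, jointP q η (ω t)) * (if δ ≤ |1 / (k : ℝ) * ∑ t, pmVal ((ω t).2 2) * pmVal ((ω t).2 3) - (∑ e : (Fin 4 → Bool) × (Fin 4 → Bool), jointP q η e * (pmVal (e.2 2) * pmVal (e.2 3)))| then (1:ℝ) else 0))) := by
          rw [hW1]
          linarith [ch02, ch13, ch01, ch23]
    _ = ∑ ω : Fin k → ((Fin 4 → Bool) × (Fin 4 → Bool)),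
          (∏ t, jointP q η (ω t)) * (1 - ((if δ ≤ |1 / (k : ℝ) * ∑ t, pmVal ((ω t).2 0) * pmVal ((ω t).2 2) - (∑ e : (Fin 4 → Bool) × (Fin 4 → Bool), jointP q η e * (pmVal (e.2 0) * pmVal (e.2 2)))| then (1:ℝ) else 0) + (if δ ≤ |1 / (k : ℝ) * ∑ t, pmVal ((ω t).2 1) * pmVal ((ω t).2 3) - (∑ e : (Fin 4 → Bool) × (Fin 4 → Bool), jointP q η e * (pmVal (e.2 1) * pmVal (e.2 3)))| then (1:ℝ) else 0) + (if δ ≤ |1 / (k : ℝ) * ∑ t, pmVal ((ω t).2 0) * pmVal ((ω t).2 1) - (∑ e : (Fin 4 → Bool) × (Fin 4 → Bool), jointP q η e * (pmVal (e.2 0) * pmVal (e.2 1)))| then (1:ℝ) else 0) + (if δ ≤ |1 / (k : ℝ) * ∑ t, pmVal ((ω t).2 2) * pmVal ((ω t).2 3) - (∑ e : (Fin 4 → Bool) × (Fin 4 → Bool), jointP q η e * (pmVal (e.2 2) * pmVal (e.2 3)))| then (1:ℝ) else 0))) := by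
          simp only [mul_sub, mul_one, mul_add]
          rw [Finset.sum_sub_distrib, Finset.sum_add_distrib, Finset.sum_add_distrib,
            Finset.sum_add_distrib]
    _ ≤ ∑ ω : Fin k → ((Fin 4 → Bool) × (Fin 4 → Bool)),
          (∏ t, jointP q η (ω t)) * (if (0 < 1 / (k : ℝ) * ∑ t, pmVal ((ω t).2 0) * pmVal ((ω t).2 2) ∧ 0 < 1 / (k : ℝ) * ∑ t, pmVal ((ω t).2 1) * pmVal ((ω t).2 3) ∧ 0 < 1 / (k : ℝ) * ∑ t, pmVal ((ω t).2 0) * pmVal ((ω t).2 1) ∧ 0 < 1 / (k : ℝ) * ∑ t, pmVal ((ω t).2 2) * pmVal ((ω t).2 3) ∧ |(1 / 2) * ((-((1 / 2) * Real.log (1 / (k : ℝ) * ∑ t, pmVal ((ω t).2 0) * pmVal ((ω t).2 2)))) + (-((1 / 2) * Real.log (1 / (k : ℝ) * ∑ t, pmVal ((ω t).2 1) * pmVal ((ω t).2 3)))) - (-((1 / 2) * Real.log (1 / (k : ℝ) * ∑ t, pmVal ((ω t).2 0) * pmVal ((ω t).2 1)))) - (-((1 / 2) * Real.log (1 / (k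 : ℝ) * ∑ t, pmVal ((ω t).2 2) * pmVal ((ω t).2 3))))) - m| < ε) then (1:ℝ) else 0) := by
          apply Finset.sum_le_sum
          intro ω _
          apply mul_le_mul_of_nonneg_left _ (hWnn ω)
          apply ind_union
          intro h02 h13 h01 h23
          have c02 := lt_of_not_ge h02
          have c13 := lt_of_not_ge h13
          have c01 := lt_of_not_ge h01
          have c23 := lt_of_not_ge h23
          rw [hcore 0 2 (by decide)] at c02
          rw [hcore 1 3 (by decide)] at c13
          rw [hcore 0 1 (by decide)] at c01
          rw [hcore 2 3 (by decide)] at c23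
          exact det_good ε μ₀ δ hμ₀ hε hδ2 hδe _ _ _ _ _ _ _ _ _
            (hbnd 0 2) (hbnd 1 3) (hbnd 0 1) (hbnd 2 3) hmval c02 c13 c01 c23
    _ = _ := (sum_pair_eq k q (fun (a b : Fin 4 → Bool) => ∏ x, channel (η x) (a x) (b x))
        (fun sh : Fin k → (Fin 4 → Bool) => if (0 < 1 / (k : ℝ) * ∑ t, pmVal (sh t 0) * pmVal (sh t 2) ∧ 0 < 1 / (k : ℝ) * ∑ t, pmVal (sh t 1) * pmVal (sh t 3) ∧ 0 < 1 / (k : ℝ) * ∑ t, pmVal (sh t 0) * pmVal (sh t 1) ∧ 0 < 1 / (k : ℝ) * ∑ t, pmVal (sh t 2) * pmVal (sh t 3) ∧ |(1 / 2) * ((-((1 / 2) * Real.log (1 / (k : ℝ) * ∑ t, pmVal (sh t 0) * pmVal (sh t 2)))) + (-((1 / 2) * Real.log (1 / (k : ℝ) * ∑ t, pmVal (sh t 1) * pmVal (sh t 3)))) - (-((1 / 2) * Real.log (1 / (k : ℝ) * ∑ t, pmVal (sh t 0) * pmVal (sh t 1)))) - (-((1 / 2) * Real.log (1 / (k : ℝ)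 * ∑ t, pmVal (sh t 2) * pmVal (sh t 3))))) - m| < ε) then (1:ℝ) else 0)).symm
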